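/- (Proposition 1) Suppose the categorical distribution on N dimensions with K_n categories each generates the optimal (first) category in dimension n with probability q_{n,1} = 1 - q_min_n·(K_n - 1), where q_min_n = (1 - (1-ξ)^{1/N})/(K_n - 1) and ξ = 0.27. If λ ≥ 6 independent samples are drawn and λ_non counts the samples containing at least one non-optimal category, then Pr(λ_non ≤ λ - ⌊λ/2⌋) ≥ 0.95. -/

import Mathlib

open Finset

private lemma binom_total (lam : ℕ) :
    ∑ i ∈ Finset.range (lam + 1),
      (lam.choose i : ℝ) * (27/100) ^ i * (73/100) ^ (lam - i) = 1 := by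
  have h := add_pow (27/100 : ℝ) (73/100) lam
  norm_num at h
  have h2 : ∑ i ∈ Finset.range (lam+1), (lam.choose i:ℝ) * (27/100)^i * (73/100)^(lam-i)
      = ∑ x ∈ Finset.range (lam + 1), (27/100:ℝ)^x * (73/100)^(lam-x) * (lam.choose x) :=
    Finset.sum_congr rfl (fun i _ => by ring)
  rw [h2, ← h]

private lemma binom_tail (lam m : ℕ) :
    ∑ i ∈ Finset.Ico m (lam + 1),
      (lam.choose i : ℝ) * (27/100) ^ i * (73/100) ^ (lam - i)
      ≤ (27/73) ^ m * (73/50) ^ lam := by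
  have h1 : ∀ i ∈ Finset.Ico m (lam + 1),
      (lam.choose i : ℝ) * (27/100) ^ i * (73/100) ^ (lam - i)
      ≤ (27/73) ^ m * (73/100) ^ lam * (lam.choose i : ℝ) := by
    intro i hi
    simp only [Finset.mem_Ico] at hi
    have hile : i ≤ lam := by omega
    have key : (27/100 : ℝ) ^ i * (73/100) ^ (lam - i)
        = (27/73) ^ i * (73/100) ^ lam := by
      have : (27/100 : ℝ) ^ i = (27/73)^i * (73/100)^i := by
        rw [← mul_pow]; norm_num
      rw [this, mul_assoc, ← pow_add]
      congr 2
      omega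
    have hmono : (27/73 : ℝ) ^ i ≤ (27/73) ^ m :=
      pow_le_pow_of_le_one (by norm_num) (by norm_num) hi.1
    have hc : (0:ℝ) ≤ (lam.choose i : ℝ) := Nat.cast_nonneg _
    calc (lam.choose i : ℝ) * (27/100) ^ i * (73/100) ^ (lam - i)
        = (27/73) ^ i * (73/100) ^ lam * (lam.choose i : ℝ) := by
          have e : (lam.choose i:ℝ) * (27/100)^i * (73/100)^(lam-i)
              = ((27/100:ℝ)^i * (73/100)^(lam-i)) * (lam.choose i) := by ring
          rw [e, key]
      _ ≤ (27/73) ^ m * (73/100) ^ lam * (lam.choose i : ℝ) := by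
          apply mul_le_mul_of_nonneg_right _ hc
          exact mul_le_mul_of_nonneg_right hmono (by positivity)
  calc ∑ i ∈ Finset.Ico m (lam + 1), (lam.choose i : ℝ) * (27/100) ^ i * (73/100) ^ (lam - i)
      ≤ ∑ i ∈ Finset.Ico m (lam + 1), (27/73) ^ m * (73/100) ^ lam * (lam.choose i : ℝ) :=
        Finset.sum_le_sum h1
    _ ≤ ∑ i ∈ Finset.range (lam + 1), (27/73) ^ m * (73/100) ^ lam * (lam.choose i : ℝ) := by
        apply Finset.sum_le_sum_of_subset_of_nonneg
        · rw [Finset.range_eq_Ico]; exact Finset.Ico_subset_Ico (by omega) le_rfl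
        · intro i _ _; positivity
    _ = (27/73) ^ m * (73/100) ^ lam * 2 ^ lam := by
        rw [← Finset.mul_sum]
        congr 1
        rw [← Nat.cast_sum]
        norm_cast
        exact Nat.sum_range_choose lam
    _ = (27/73) ^ m * (73/50) ^ lam := by
        rw [mul_assoc, ← mul_pow]; norm_num

private lemma tail_small (lam : ℕ) (h : 18 ≤ lam) :
    (27/73 : ℝ) ^ (lam - lam/2 + 1) * (73/50) ^ lam ≤ 1/20 := by
  rcases Nat.even_or_odd lam with ⟨k, hk⟩ | ⟨k, hk⟩
  · subst hk
    have hk9 : 9 ≤ k := by omega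
    have hm : k + k - (k + k)/2 + 1 = k + 1 := by omega
    rw [hm]
    have e : (27/73 : ℝ) ^ (k+1) * (73/50) ^ (k+k) = (27/73) * (1971/2500) ^ k := by
      have hp : ((27:ℝ)/73)^k * (5329/2500)^k = (1971/2500)^k := by
        rw [← mul_pow]; norm_num
      rw [pow_succ, show k + k = 2 * k by ring, pow_mul,
        show ((73:ℝ)/50)^2 = 5329/2500 by norm_num]
      linear_combination (27/73 : ℝ) * hp
    rw [e]
    have hg : (1971/2500 : ℝ) ^ k ≤ (1971/2500) ^ 9 :=
      pow_le_pow_of_le_one (by norm_num) (by norm_num) hk9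
    nlinarith [hg]
  · subst hk
    have hk9 : 9 ≤ k := by omega
    have hm : 2*k + 1 - (2*k + 1)/2 + 1 = k + 2 := by omega
    rw [hm]
    have e : (27/73 : ℝ) ^ (k+2) * (73/50) ^ (2*k+1)
        = (729/3650) * (1971/2500) ^ k := by
      have hp : ((27:ℝ)/73)^k * (5329/2500)^k = (1971/2500)^k := by
        rw [← mul_pow]; norm_num
      rw [pow_add, pow_add, pow_mul,
        show ((73:ℝ)/50)^2 = 5329/2500 by norm_num]
      linear_combination ((27/73:ℝ)^2 * (73/50)) * hp
    rw [e]
    have hg : (1971/2500 : ℝ) ^ k ≤ (1971/2500) ^ 9 :=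
      pow_le_pow_of_le_one (by norm_num) (by norm_num) hk9
    nlinarith [hg]

private lemma binom_key (lam : ℕ) (hlam : 6 ≤ lam) :
    (0.95 : ℝ) ≤ ∑ i ∈ Finset.range (lam - lam / 2 + 1),
      (lam.choose i : ℝ) * (27/100) ^ i * (73/100) ^ (lam - i) := by
  rcases lt_or_ge lam 18 with hs | hb
  · interval_cases lam <;>
      (simp [Finset.sum_range_succ]; norm_num [Nat.choose])
  · set f : ℕ → ℝ := fun i => (lam.choose i : ℝ) * (27/100) ^ i * (73/100) ^ (lam - i)
      with hf
    have hm : lam - lam / 2 + 1 ≤ lam + 1 := by omega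
    have hsplit : (∑ i ∈ Finset.Ico 0 (lam - lam / 2 + 1), f i)
        + ∑ i ∈ Finset.Ico (lam - lam / 2 + 1) (lam + 1), f i
        = ∑ i ∈ Finset.Ico 0 (lam + 1), f i :=
      Finset.sum_Ico_consecutive f (Nat.zero_le _) hm
    rw [← Finset.range_eq_Ico, ← Finset.range_eq_Ico] at hsplit
    have htot : ∑ i ∈ Finset.range (lam + 1), f i = 1 := binom_total lam
    have htail : ∑ i ∈ Finset.Ico (lam - lam / 2 + 1) (lam + 1), f i
        ≤ (27/73) ^ (lam - lam / 2 + 1) * (73/50) ^ lam := binom_tail lam _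
    have hsm := tail_small lam hb
    have : ∑ i ∈ Finset.range (lam - lam / 2 + 1), f i ≥ 1 - 1/20 := by
      linarith
    norm_num at this ⊢
    linarith

/-- Proposition 1 of the paper. The categorical distribution generates the optimal
category in dimension `n` with probability `q1 n`; a sample avoids all non-optimal
categories with probability `∏ n, q1 n`, and `λ_non ~ Bin(λ, 1 - ∏ n, q1 n)`. -/
theorem stmt8 (N : ℕ) (hN : 1 ≤ N) (K : Fin N → ℕ) (hK : ∀ n, 2 ≤ K n)
    (ξ : ℝ) (hξ : ξ = 0.27)
    (qmin q1 : Fin N → ℝ)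
    (hqmin : ∀ n, qmin n = (1 - (1 - ξ) ^ ((1 : ℝ) / N)) / (K n - 1))
    (hq1 : ∀ n, q1 n = 1 - qmin n * (K n - 1))
    (lam : ℕ) (hlam : 6 ≤ lam)
    (p : ℝ) (hp : p = 1 - ∏ n, q1 n) :
    0.95 ≤ ∑ i ∈ Finset.range (lam - lam / 2 + 1),
      (lam.choose i : ℝ) * p ^ i * (1 - p) ^ (lam - i) := by
  have hNne : (N : ℝ) ≠ 0 := Nat.cast_ne_zero.mpr (by omega)
  have hq1' : ∀ n, q1 n = (1 - ξ) ^ ((1 : ℝ) / N) := by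
    intro n
    have hKne : (K n : ℝ) - 1 ≠ 0 := by
      have h2 : (2:ℝ) ≤ (K n : ℝ) := by exact_mod_cast hK n
      linarith
    rw [hq1, hqmin, div_mul_cancel₀ _ hKne]; ring
  have hprod : ∏ n, q1 n = ((1 - ξ) ^ ((1 : ℝ) / N)) ^ N := by
    simp [hq1', Finset.prod_const]
  have hp27 : p = 27/100 := by
    rw [hp, hprod, ← Real.rpow_natCast ((1 - ξ) ^ ((1 : ℝ) / N)) N,
      ← Real.rpow_mul (by norm_num [hξ]), one_div, inv_mul_cancel₀ hNne,
      Real.rpow_one, hξ]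
    norm_num
  have h73 : (1:ℝ) - 27/100 = 73/100 := by norm_num
  rw [hp27, h73]
  exact binom_key lam hlam
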